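/- arXiv:2303.15830 — 2 statements merged into one kernel-verified Lean document; each statement's English description precedes it below -/
import Mathlib

section
/- Let W ~ N(m, v²) with v > 0 and set Z = e^W. For constants a, b ∈ ℝ and 0 < q₁ ≤ q₂, one has E[Z·(a + b·Z)·𝟙_{q₁ ≤ Z ≤ q₂}] = a·e^{m + v²/2}·(Φ(k₂) - Φ(k₁)) + b·e^{2m + 2v²}·(Φ(k₂ - v) - Φ(k₁ - v)), where kᵢ = (ln(qᵢ) - m)/v - v for i = 1, 2, and Φ is the standard normal CDF. -/
open MeasureTheory ProbabilityTheory Real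
open scoped NNReal ENNReal

lemma aux_pdf_shift (m v c : ℝ) (hv : 0 < v) (x : ℝ) :
    Real.exp (c * x) * gaussianPDFReal m (Real.toNNReal (v ^ 2)) x
      = Real.exp (c * m + c ^ 2 * v ^ 2 / 2)
        * gaussianPDFReal (m + c * v ^ 2) (Real.toNNReal (v ^ 2)) x := by
  have hc : ((Real.toNNReal (v ^ 2) : ℝ≥0) : ℝ) = v ^ 2 := Real.coe_toNNReal _ (sq_nonneg v)
  simp only [gaussianPDFReal, hc]
  rw [mul_left_comm, mul_left_comm (Real.exp (c * m + c ^ 2 * v ^ 2 / 2))]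
  congr 1
  rw [← Real.exp_add, ← Real.exp_add]
  congr 1
  have hv2 : (v : ℝ) ^ 2 ≠ 0 := by positivity
  field_simp
  ring

lemma aux_gauss_map (μ v : ℝ) (hv : 0 < v) :
    (gaussianReal 0 1).map (fun x => v * x + μ) = gaussianReal μ (Real.toNNReal (v ^ 2)) := by
  have h1 : (gaussianReal 0 1).map (fun x => v * x) = gaussianReal 0 (Real.toNNReal (v ^ 2)) := by
    have h := gaussianReal_map_const_mul (μ := 0) (v := 1) v
    have hnn : (NNReal.mk (v ^ 2) (sq_nonneg v)) * 1 = Real.toNNReal (v ^ 2) := by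
      rw [← NNReal.coe_inj]
      simp [Real.coe_toNNReal _ (sq_nonneg v)]
    rw [mul_zero, hnn] at h
    exact h
  have h2 : (gaussianReal 0 (Real.toNNReal (v ^ 2))).map (· + μ)
      = gaussianReal (0 + μ) (Real.toNNReal (v ^ 2)) := gaussianReal_map_add_const μ
  rw [zero_add] at h2
  rw [← h2, ← h1, Measure.map_map (by fun_prop) (by fun_prop)]
  rfl

lemma aux_gauss_Iic (μ v t : ℝ) (hv : 0 < v) :
    ∫ x in Set.Iic t, gaussianPDFReal μ (Real.toNNReal (v ^ 2)) x
      = ((gaussianReal 0 1) (Set.Iic ((t - μ) / v))).toReal := by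
  have hvv : Real.toNNReal (v ^ 2) ≠ 0 := by
    simp [Real.toNNReal_eq_zero, not_le]; positivity
  have h := gaussianReal_apply_eq_integral μ hvv (Set.Iic t)
  have hint : ((gaussianReal μ (Real.toNNReal (v ^ 2))) (Set.Iic t)).toReal
      = ∫ x in Set.Iic t, gaussianPDFReal μ (Real.toNNReal (v ^ 2)) x := by
    rw [h, ENNReal.toReal_ofReal]
    exact setIntegral_nonneg measurableSet_Iic fun x _ => gaussianPDFReal_nonneg _ _ _
  rw [← hint, ← aux_gauss_map μ v hv, Measure.map_apply (by fun_prop) measurableSet_Iic]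
  have hpre : ((fun x => v * x + μ) ⁻¹' Set.Iic t) = Set.Iic ((t - μ) / v) := by
    ext x
    simp only [Set.mem_preimage, Set.mem_Iic]
    rw [le_div_iff₀ hv]
    constructor <;> intro h' <;> nlinarith
  rw [hpre]

lemma aux_gauss_Icc (μ v s t : ℝ) (hv : 0 < v) (hst : s ≤ t) :
    ∫ x in Set.Icc s t, gaussianPDFReal μ (Real.toNNReal (v ^ 2)) x
      = ((gaussianReal 0 1) (Set.Iic ((t - μ) / v))).toReal
        - ((gaussianReal 0 1) (Set.Iic ((s - μ) / v))).toReal := by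
  rw [MeasureTheory.integral_Icc_eq_integral_Ioc,
    ← intervalIntegral.integral_of_le hst,
    ← intervalIntegral.integral_Iic_sub_Iic
      ((integrable_gaussianPDFReal _ _).integrableOn)
      ((integrable_gaussianPDFReal _ _).integrableOn),
    aux_gauss_Iic _ _ _ hv, aux_gauss_Iic _ _ _ hv]

/-- For W ~ N(m, v²), Z = e^W, constants a, b and 0 < q₁ ≤ q₂:
E[Z(a + bZ)𝟙_{q₁ ≤ Z ≤ q₂}] = a·e^{m+v²/2}(Φ(k₂) - Φ(k₁)) + b·e^{2m+2v²}(Φ(k₂-v) - Φ(k₁-v))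
where kᵢ = (ln qᵢ - m)/v - v and Φ is the standard normal CDF. -/
theorem stmt_9 (m v a b q₁ q₂ : ℝ) (hv : 0 < v) (hq₁ : 0 < q₁) (hq : q₁ ≤ q₂)
    (Φ : ℝ → ℝ)
    (hΦ : ∀ x, Φ x = ((gaussianReal 0 1) (Set.Iic x)).toReal)
    (k₁ k₂ : ℝ)
    (hk₁ : k₁ = (Real.log q₁ - m) / v - v)
    (hk₂ : k₂ = (Real.log q₂ - m) / v - v) :
    ∫ w, Set.indicator {w : ℝ | q₁ ≤ Real.exp w ∧ Real.exp w ≤ q₂}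
        (fun w => Real.exp w * (a + b * Real.exp w)) w
        ∂(gaussianReal m (Real.toNNReal (v ^ 2))) =
      a * Real.exp (m + v ^ 2 / 2) * (Φ k₂ - Φ k₁) +
        b * Real.exp (2 * m + 2 * v ^ 2) * (Φ (k₂ - v) - Φ (k₁ - v)) := by
  have hq₂ : 0 < q₂ := lt_of_lt_of_le hq₁ hq
  have hvv : Real.toNNReal (v ^ 2) ≠ 0 := by
    simp [Real.toNNReal_eq_zero, not_le]; positivity
  set V := Real.toNNReal (v ^ 2) with hV
  -- the set is an Icc
  have hS : {w : ℝ | q₁ ≤ Real.exp w ∧ Real.exp w ≤ q₂}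
      = Set.Icc (Real.log q₁) (Real.log q₂) := by
    ext w
    simp only [Set.mem_setOf_eq, Set.mem_Icc]
    rw [Real.log_le_iff_le_exp hq₁, Real.le_log_iff_exp_le hq₂]
  -- rewrite the integral wrt volume with density
  rw [gaussianReal_of_var_ne_zero _ hvv, gaussianPDF_def]
  have : (fun x => ENNReal.ofReal (gaussianPDFReal m V x))
      = fun x => ((Real.toNNReal (gaussianPDFReal m V x) : ℝ≥0) : ℝ≥0∞) := rfl
  rw [this, integral_withDensity_eq_integral_smul
    ((measurable_gaussianPDFReal m V).real_toNNReal) _]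
  have hsmul : ∀ x : ℝ, (Real.toNNReal (gaussianPDFReal m V x))
        • (Set.indicator {w : ℝ | q₁ ≤ Real.exp w ∧ Real.exp w ≤ q₂}
          (fun w => Real.exp w * (a + b * Real.exp w)) x)
      = Set.indicator (Set.Icc (Real.log q₁) (Real.log q₂))
          (fun x => gaussianPDFReal m V x * (Real.exp x * (a + b * Real.exp x))) x := by
    intro x
    rw [hS, NNReal.smul_def, Real.coe_toNNReal _ (gaussianPDFReal_nonneg _ _ _)]
    by_cases hx : x ∈ Set.Icc (Real.log q₁) (Real.log q₂)
    · rw [Set.indicator_of_mem hx, Set.indicator_of_mem hx, smul_eq_mul]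
    · rw [Set.indicator_of_notMem hx, Set.indicator_of_notMem hx, smul_zero]
  simp_rw [hsmul]
  rw [integral_indicator measurableSet_Icc]
  -- pointwise rewriting of the integrand
  have h1 : ∀ x : ℝ, Real.exp x * gaussianPDFReal m V x
      = Real.exp (m + v ^ 2 / 2) * gaussianPDFReal (m + v ^ 2) V x := by
    intro x
    have h := aux_pdf_shift m v 1 hv x
    have e1 : (1:ℝ) * m + 1 ^ 2 * v ^ 2 / 2 = m + v ^ 2 / 2 := by ring
    rw [one_mul, e1, one_mul] at h
    exact h
  have h2 : ∀ x : ℝ, Real.exp (2 * x) * gaussianPDFReal m V x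
      = Real.exp (2 * m + 2 * v ^ 2) * gaussianPDFReal (m + 2 * v ^ 2) V x := by
    intro x
    have h := aux_pdf_shift m v 2 hv x
    have e1 : (2:ℝ) * m + 2 ^ 2 * v ^ 2 / 2 = 2 * m + 2 * v ^ 2 := by ring
    rw [e1] at h
    exact h
  have hintegrand : ∀ x : ℝ,
      gaussianPDFReal m V x * (Real.exp x * (a + b * Real.exp x))
      = a * Real.exp (m + v ^ 2 / 2) * gaussianPDFReal (m + v ^ 2) V x
        + b * Real.exp (2 * m + 2 * v ^ 2) * gaussianPDFReal (m + 2 * v ^ 2) V x := by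
    intro x
    have e2 : Real.exp x * Real.exp x = Real.exp (2 * x) := by
      rw [← Real.exp_add]; ring_nf
    have ha := h1 x
    have hb := h2 x
    linear_combination a * ha + b * hb + b * gaussianPDFReal m V x * e2
  simp_rw [hintegrand]
  have hlog : Real.log q₁ ≤ Real.log q₂ := Real.log_le_log hq₁ hq
  rw [integral_add
    (((integrable_gaussianPDFReal (m + v ^ 2) V).restrict).const_mul _)
    (((integrable_gaussianPDFReal (m + 2 * v ^ 2) V).restrict).const_mul _),
    integral_const_mul, integral_const_mul,
    aux_gauss_Icc _ v _ _ hv hlog, aux_gauss_Icc _ v _ _ hv hlog,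
    hΦ, hΦ, hΦ, hΦ]
  have ek₂ : (Real.log q₂ - (m + v ^ 2)) / v = k₂ := by
    rw [hk₂]; field_simp; ring
  have ek₁ : (Real.log q₁ - (m + v ^ 2)) / v = k₁ := by
    rw [hk₁]; field_simp; ring
  have ek₂' : (Real.log q₂ - (m + 2 * v ^ 2)) / v = k₂ - v := by
    rw [hk₂]; field_simp; ring
  have ek₁' : (Real.log q₁ - (m + 2 * v ^ 2)) / v = k₁ - v := by
    rw [hk₁]; field_simp; ring
  rw [ek₂, ek₁, ek₂', ek₁']
end

section
/- Lower bound on VaR under a budget constraint: Let Z be a positive atomless integrable random variable with CDF K₀ and let K₁(y) = E[Z·𝟙_{Z ≤ y}]. If X ≥ 0 is a random variable with E[Z·X] = x₀ > 0 and K₁(K₀⁻¹(1-γ)) > 0 for γ ∈ (0,1), then VaR_γ[X] = -G(γ) satisfies -x₀/K₁(K₀⁻¹(1-γ)) ≤ VaR_γ[X] ≤ 0, where G is the upper quantile function of X. -/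
open MeasureTheory

/-- Lower bound on VaR under a budget constraint: with Z positive atomless integrable,
K₁(y) = E[Z·𝟙_{Z ≤ y}], X ≥ 0 with E[Z·X] = x₀ > 0 and K₁(K₀⁻¹(1-γ)) > 0, the VaR
VaR_γ[X] = -G(γ) satisfies -x₀/K₁(K₀⁻¹(1-γ)) ≤ VaR_γ[X] ≤ 0. -/
theorem stmt_16 {Ω : Type*} [MeasurableSpace Ω] (μ : Measure Ω) [IsProbabilityMeasure μ]
    (Z : Ω → ℝ) (hZ : Measurable Z) (hZint : Integrable Z μ)
    (hpos : ∀ᵐ ω ∂μ, 0 < Z ω)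
    (hatomless : ∀ a : ℝ, 0 < a → μ {ω | Z ω = a} = 0)
    (K₀ Kinv K₁ : ℝ → ℝ)
    (hK₀ : ∀ y, K₀ y = (μ {ω | Z ω ≤ y}).toReal)
    (hKinv : ∀ s, Kinv s = sInf {z : ℝ | s < K₀ z})
    (hK₁ : ∀ y, K₁ y = ∫ ω, Set.indicator {ω | Z ω ≤ y} Z ω ∂μ)
    (X : Ω → ℝ) (hX : Measurable X) (hXnonneg : ∀ᵐ ω ∂μ, 0 ≤ X ω)
    (hZXint : Integrable (fun ω => Z ω * X ω) μ)
    (x₀ : ℝ) (hx₀ : 0 < x₀) (hbudget : ∫ ω, Z ω * X ω ∂μ = x₀)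
    (γ : ℝ) (hγ : γ ∈ Set.Ioo (0:ℝ) 1)
    (hK₁pos : 0 < K₁ (Kinv (1 - γ)))
    (G : ℝ → ℝ) (hG : ∀ s, G s = sInf {y : ℝ | s < (μ {ω | X ω ≤ y}).toReal}) :
    -x₀ / K₁ (Kinv (1 - γ)) ≤ -G γ ∧ -G γ ≤ 0 := by
  obtain ⟨hγ0, hγ1⟩ := hγ
  set c := Kinv (1 - γ) with hc
  -- Z ≤ 0 is null
  have hZ0 : μ {ω | Z ω ≤ 0} = 0 := by
    have : {ω | Z ω ≤ 0} ⊆ {ω | ¬ 0 < Z ω} := by intro ω h; simpa using h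
    exact measure_mono_null this hpos
  -- X < 0 is null
  have hX0 : μ {ω | X ω < 0} = 0 := by
    have : {ω | X ω < 0} ⊆ {ω | ¬ 0 ≤ X ω} := by intro ω h; simpa using h
    exact measure_mono_null this hXnonneg
  -- c > 0
  have hcpos : 0 < c := by
    by_contra h
    push_neg at h
    have h0 : K₁ c = 0 := by
      rw [hK₁]
      have hae : ∀ᵐ ω ∂μ, Set.indicator {ω | Z ω ≤ c} Z ω = (0 : ℝ) := by
        filter_upwards [hpos] with ω hω
        apply Set.indicator_of_notMem
        simp only [Set.mem_setOf_eq, not_le]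
        linarith
      rw [integral_congr_ae hae, integral_zero]
    rw [h0] at hK₁pos; exact lt_irrefl 0 hK₁pos
  -- for z < c, μ(Z ≤ z) ≤ 1 - γ
  have hKle : ∀ z, z < c → (μ {ω | Z ω ≤ z}).toReal ≤ 1 - γ := by
    intro z hz
    by_contra h2
    push_neg at h2
    have hmem : z ∈ {z : ℝ | 1 - γ < K₀ z} := by
      simp only [Set.mem_setOf_eq, hK₀]; exact h2
    have hbdd : BddBelow {z : ℝ | 1 - γ < K₀ z} := by
      refine ⟨0, fun w hw => ?_⟩
      by_contra hwneg
      push_neg at hwneg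
      have hsub : {ω | Z ω ≤ w} ⊆ {ω | Z ω ≤ 0} := by
        intro ω h; simp only [Set.mem_setOf_eq] at *; linarith
      have : K₀ w = 0 := by
        rw [hK₀, measure_mono_null hsub hZ0]; simp
      rw [Set.mem_setOf_eq, this] at hw; linarith
    have := csInf_le hbdd hmem
    rw [← hKinv] at this
    linarith
  have hBmeas : MeasurableSet {ω | Z ω ≤ c} := hZ measurableSet_Iic
  -- μ(Z ≤ c) ≤ 1 - γ
  have hBle : (μ {ω | Z ω ≤ c}).toReal ≤ 1 - γ := by
    have hlt : μ {ω | Z ω < c} ≤ ENNReal.ofReal (1 - γ) := by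
      have hun : {ω | Z ω < c} = ⋃ n : ℕ, {ω | Z ω ≤ c - 1/(n+1)} := by
        ext ω
        simp only [Set.mem_setOf_eq, Set.mem_iUnion]
        constructor
        · intro h
          obtain ⟨n, hn⟩ := exists_nat_one_div_lt (by linarith : (0:ℝ) < c - Z ω)
          exact ⟨n, by linarith⟩
        · rintro ⟨n, hn⟩
          have : (0:ℝ) < 1/((n:ℝ)+1) := by positivity
          linarith
      rw [hun, Directed.measure_iUnion]
      · refine iSup_le fun n => ?_
        rw [ENNReal.le_ofReal_iff_toReal_le (measure_ne_top μ _) (by linarith)]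
        refine hKle _ ?_
        have : (0:ℝ) < 1/((n:ℝ)+1) := by positivity
        linarith
      · refine Monotone.directed_le fun m n hmn => ?_
        intro ω h
        simp only [Set.mem_setOf_eq] at *
        have h1 : 1/((n:ℝ)+1) ≤ 1/((m:ℝ)+1) := by
          apply one_div_le_one_div_of_le
          · positivity
          · have : (m:ℝ) ≤ (n:ℝ) := Nat.cast_le.mpr hmn
            linarith
        linarith
    have hle : μ {ω | Z ω ≤ c} ≤ ENNReal.ofReal (1 - γ) := by
      have hsplit : {ω | Z ω ≤ c} ⊆ {ω | Z ω < c} ∪ {ω | Z ω = c} := by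
        intro ω h
        have h2 : Z ω ≤ c := h
        exact h2.lt_or_eq
      calc μ {ω | Z ω ≤ c} ≤ μ ({ω | Z ω < c} ∪ {ω | Z ω = c}) := measure_mono hsplit
        _ ≤ μ {ω | Z ω < c} + μ {ω | Z ω = c} := measure_union_le _ _
        _ = μ {ω | Z ω < c} := by rw [hatomless c hcpos, add_zero]
        _ ≤ ENNReal.ofReal (1 - γ) := hlt
    calc (μ {ω | Z ω ≤ c}).toReal ≤ (ENNReal.ofReal (1-γ)).toReal :=
          ENNReal.toReal_mono ENNReal.ofReal_ne_top hle
      _ = 1 - γ := ENNReal.toReal_ofReal (by linarith)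
  -- bddBelow of the quantile set for X
  have hbddG : BddBelow {y : ℝ | γ < (μ {ω | X ω ≤ y}).toReal} := by
    refine ⟨0, fun y hy => ?_⟩
    by_contra hyneg
    push_neg at hyneg
    have hsub : {ω | X ω ≤ y} ⊆ {ω | X ω < 0} := by
      intro ω h; simp only [Set.mem_setOf_eq] at *; linarith
    have : (μ {ω | X ω ≤ y}).toReal = 0 := by
      rw [measure_mono_null hsub hX0]; simp
    rw [Set.mem_setOf_eq, this] at hy; linarith
  have hSnonneg : ∀ y ∈ {y : ℝ | γ < (μ {ω | X ω ≤ y}).toReal}, (0:ℝ) ≤ y := by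
    intro y hy
    by_contra hyneg
    push_neg at hyneg
    have hsub : {ω | X ω ≤ y} ⊆ {ω | X ω < 0} := by
      intro ω h; simp only [Set.mem_setOf_eq] at *; linarith
    have : (μ {ω | X ω ≤ y}).toReal = 0 := by
      rw [measure_mono_null hsub hX0]; simp
    rw [Set.mem_setOf_eq, this] at hy; linarith
  have hGnonneg : 0 ≤ G γ := by
    rw [hG]; exact Real.sInf_nonneg hSnonneg
  -- main bound : G γ ≤ x₀ / K₁ c
  have hK₁ne : K₁ c ≠ 0 := ne_of_gt hK₁pos
  have hmain : G γ ≤ x₀ / K₁ c := by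
    by_contra h
    push_neg at h
    set t : ℝ := x₀ / K₁ c with ht
    have htpos : 0 < t := div_pos hx₀ hK₁pos
    set t' : ℝ := (t + G γ) / 2 with ht'
    have ht't : t < t' := by simp only [ht']; linarith
    have ht'G : t' < G γ := by simp only [ht']; linarith
    have ht'pos : 0 < t' := lt_trans htpos ht't
    -- t' is not in the quantile set
    have hS : (μ {ω | X ω ≤ t'}).toReal ≤ γ := by
      by_contra h2
      push_neg at h2
      have := csInf_le hbddG (Set.mem_setOf_eq ▸ h2 :
        t' ∈ {y : ℝ | γ < (μ {ω | X ω ≤ y}).toReal})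
      rw [← hG] at this
      linarith
    set A : Set Ω := {ω | t' < X ω} with hA
    set B : Set Ω := {ω | Z ω ≤ c} with hB
    have hAmeas : MeasurableSet A := measurableSet_lt measurable_const hX
    have hXt'meas : MeasurableSet {ω | X ω ≤ t'} := hX measurableSet_Iic
    have hAcompl : A = {ω | X ω ≤ t'}ᶜ := by
      ext ω; simp [hA, not_le]
    have hAge : 1 - γ ≤ (μ A).toReal := by
      rw [hAcompl, prob_compl_eq_one_sub hXt'meas,
        ENNReal.toReal_sub_of_le prob_le_one ENNReal.one_ne_top]
      simp only [ENNReal.toReal_one]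
      linarith
    -- measure arithmetic
    have hfin : ∀ s : Set Ω, μ s ≠ ⊤ := fun s => measure_ne_top μ s
    have hmAB : (μ (A ∩ B)).toReal + (μ (A \ B)).toReal = (μ A).toReal := by
      rw [← ENNReal.toReal_add (hfin _) (hfin _), measure_inter_add_diff A hBmeas]
    have hmBA : (μ (B ∩ A)).toReal + (μ (B \ A)).toReal = (μ B).toReal := by
      rw [← ENNReal.toReal_add (hfin _) (hfin _), measure_inter_add_diff B hAmeas]
    have hinter : (μ (A ∩ B)).toReal = (μ (B ∩ A)).toReal := by rw [Set.inter_comm]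
    -- integral comparison on pieces
    have hZintAB : IntegrableOn Z (A \ B) μ := hZint.integrableOn
    have hZintBA : IntegrableOn Z (B \ A) μ := hZint.integrableOn
    have hlow : c * (μ (A \ B)).toReal ≤ ∫ ω in A \ B, Z ω ∂μ := by
      refine le_trans (le_of_eq ?_)
        (setIntegral_ge_of_const_le (c := c) (hAmeas.diff hBmeas) (hfin _) ?_ hZintAB)
      · rw [smul_eq_mul, mul_comm]; rfl
      intro x hx
      have : ¬ Z x ≤ c := hx.2
      linarith
    have hhigh : ∫ ω in B \ A, Z ω ∂μ ≤ c * (μ (B \ A)).toReal := by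
      have := setIntegral_mono_on hZintBA (integrableOn_const (hfin _)) (hBmeas.diff hAmeas)
        (fun x hx => (hx.1 : Z x ≤ c))
      simpa [setIntegral_const, mul_comm, measureReal_def] using this
    -- ∫_B Z ≤ ∫_A Z
    have hIBA : ∫ ω in B, Z ω ∂μ ≤ ∫ ω in A, Z ω ∂μ := by
      have h1 : ∫ ω in A ∩ B, Z ω ∂μ + ∫ ω in A \ B, Z ω ∂μ = ∫ ω in A, Z ω ∂μ :=
        integral_inter_add_diff hBmeas hZint.integrableOn
      have h2 : ∫ ω in B ∩ A, Z ω ∂μ + ∫ ω in B \ A, Z ω ∂μ = ∫ ω in B, Z ω ∂μ :=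
        integral_inter_add_diff hAmeas hZint.integrableOn
      have h3 : ∫ ω in A ∩ B, Z ω ∂μ = ∫ ω in B ∩ A, Z ω ∂μ := by rw [Set.inter_comm]
      have h4 : c * (μ (B \ A)).toReal ≤ c * (μ (A \ B)).toReal := by
        apply mul_le_mul_of_nonneg_left _ (le_of_lt hcpos)
        nlinarith [hAge, hBle, hmAB, hmBA, hinter]
      linarith
    -- K₁ c = ∫_B Z
    have hK₁B : K₁ c = ∫ ω in B, Z ω ∂μ := by
      rw [hK₁, ← integral_indicator hBmeas]
    -- main chain
    have hchain1 : ∫ ω in A, Z ω * X ω ∂μ ≤ x₀ := by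
      rw [← hbudget]
      refine setIntegral_le_integral hZXint ?_
      filter_upwards [hpos, hXnonneg] with ω h1 h2
      exact mul_nonneg (le_of_lt h1) h2
    have hchain2 : ∫ ω in A, t' * Z ω ∂μ ≤ ∫ ω in A, Z ω * X ω ∂μ := by
      refine setIntegral_mono_on_ae ((hZint.const_mul t').integrableOn)
        (hZXint.integrableOn) hAmeas ?_
      filter_upwards [hpos] with ω hω hmem
      have hXω : t' ≤ X ω := le_of_lt hmem
      calc t' * Z ω = Z ω * t' := mul_comm _ _
        _ ≤ Z ω * X ω := mul_le_mul_of_nonneg_left hXω (le_of_lt hω)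
    have hchain3 : ∫ ω in A, t' * Z ω ∂μ = t' * ∫ ω in A, Z ω ∂μ :=
      integral_const_mul t' _
    have htK : t * K₁ c = x₀ := div_mul_cancel₀ x₀ hK₁ne
    have hfinal : t * K₁ c < t' * K₁ c := mul_lt_mul_of_pos_right ht't hK₁pos
    have : t' * K₁ c ≤ x₀ := by
      calc t' * K₁ c = t' * ∫ ω in B, Z ω ∂μ := by rw [hK₁B]
        _ ≤ t' * ∫ ω in A, Z ω ∂μ := mul_le_mul_of_nonneg_left hIBA (le_of_lt ht'pos)
        _ = ∫ ω in A, t' * Z ω ∂μ := hchain3.symm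
        _ ≤ ∫ ω in A, Z ω * X ω ∂μ := hchain2
        _ ≤ x₀ := hchain1
    linarith
  constructor
  · rw [neg_div]
    linarith
  · linarith
end
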